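/- For all real x with 0 < x < 1 and all positive integers k and ℓ, the two-color Ramsey number satisfies R(k,ℓ) ≤ x^{-(k-1)} · (1-x)^{-(ℓ-1)}. -/
import Mathlib


open Finset SimpleGraph Real

/-- The two-color Ramsey number: the least `N` such that every red-blue coloring of the
edges of the complete graph on `N` vertices contains a red `K_k` or a blue `K_ℓ`. -/
noncomputable def ramsey (k l : ℕ) : ℕ :=
  sInf {N | ∀ red : SimpleGraph (Fin N),
    (∃ s : Finset (Fin N), red.IsNClique k s) ∨ (∃ s : Finset (Fin N), redᶜ.IsNClique l s)}

lemma ramseyAux : ∀ (n a b : ℕ), a + b = n → ∀ {V : Type} [DecidableEq V]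
    (G : SimpleGraph V) [DecidableRel G.Adj] (s : Finset V), (a + b).choose a ≤ s.card →
    (∃ t ⊆ s, G.IsNClique (a + 1) t) ∨ (∃ t ⊆ s, Gᶜ.IsNClique (b + 1) t) := by
  intro n
  induction n with
  | zero =>
    intro a b hab V _ G _ s hs
    have ha : a = 0 := by omega
    subst ha
    simp only [Nat.choose_zero_right] at hs
    have hpos : 0 < s.card := by omega
    obtain ⟨v, hv⟩ := Finset.card_pos.mp hpos
    exact Or.inl ⟨{v}, Finset.singleton_subset_iff.mpr hv,
      SimpleGraph.isNClique_one.mpr ⟨v, rfl⟩⟩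
  | succ n ih =>
    intro a b hab V _ G _ s hs
    rcases Nat.eq_zero_or_pos a with ha | ha
    · subst ha
      simp only [Nat.choose_zero_right] at hs
      have hpos : 0 < s.card := by omega
      obtain ⟨v, hv⟩ := Finset.card_pos.mp hpos
      exact Or.inl ⟨{v}, Finset.singleton_subset_iff.mpr hv,
        SimpleGraph.isNClique_one.mpr ⟨v, rfl⟩⟩
    rcases Nat.eq_zero_or_pos b with hb | hb
    · subst hb
      simp only [Nat.add_zero, Nat.choose_self] at hs
      have hpos : 0 < s.card := by omega
      obtain ⟨v, hv⟩ := Finset.card_pos.mp hpos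
      exact Or.inr ⟨{v}, Finset.singleton_subset_iff.mpr hv,
        SimpleGraph.isNClique_one.mpr ⟨v, rfl⟩⟩
    obtain ⟨a, rfl⟩ := Nat.exists_eq_add_of_lt ha
    obtain ⟨b, rfl⟩ := Nat.exists_eq_add_of_lt hb
    simp only [Nat.zero_add] at *
    have hpas : (a + 1 + (b + 1)).choose (a + 1)
        = (a + (b + 1)).choose a + (a + 1 + b).choose (a + 1) := by
      have h1 : a + 1 + (b + 1) = (a + (b + 1)) + 1 := by omega
      rw [h1, Nat.choose_succ_succ]
      congr 2
      omega
    have hpos : 0 < s.card := by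
      have := Nat.choose_pos (show a + 1 ≤ a + 1 + (b + 1) by omega)
      omega
    obtain ⟨v, hv⟩ := Finset.card_pos.mp hpos
    set A := (s.erase v).filter (fun w => G.Adj v w) with hA
    set B := (s.erase v).filter (fun w => ¬ G.Adj v w) with hB
    have hcard : A.card + B.card = s.card - 1 := by
      rw [hA, hB, Finset.card_filter_add_card_filter_not,
        Finset.card_erase_of_mem hv]
    have hAs : A ⊆ s := (Finset.filter_subset _ _).trans (Finset.erase_subset _ _)
    have hBs : B ⊆ s := (Finset.filter_subset _ _).trans (Finset.erase_subset _ _)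
    have hcases : (a + (b + 1)).choose a ≤ A.card ∨ (a + 1 + b).choose (a + 1) ≤ B.card := by
      by_contra h
      push_neg at h
      omega
    rcases hcases with hA' | hB'
    · rcases ih a (b + 1) (by omega) G A hA' with ⟨t, hts, ht⟩ | ⟨t, hts, ht⟩
      · left
        refine ⟨insert v t, ?_, ht.insert fun w hw => ?_⟩
        · exact Finset.insert_subset hv (hts.trans hAs)
        · have := hts hw
          rw [hA, Finset.mem_filter] at this
          exact this.2
      · exact Or.inr ⟨t, hts.trans hAs, ht⟩
    · rcases ih (a + 1) b (by omega) G B hB' with ⟨t, hts, ht⟩ | ⟨t, hts, ht⟩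
      · exact Or.inl ⟨t, hts.trans hBs, ht⟩
      · right
        refine ⟨insert v t, Finset.insert_subset hv (hts.trans hBs),
          ht.insert fun w hw => ?_⟩
        have hw' := hts hw
        rw [hB, Finset.mem_filter, Finset.mem_erase] at hw'
        exact (SimpleGraph.compl_adj G v w).mpr ⟨(hw'.1.1).symm, hw'.2⟩

lemma ramsey_le_choose (k l : ℕ) (hk : 0 < k) (hl : 0 < l) :
    ramsey k l ≤ (k - 1 + (l - 1)).choose (k - 1) := by
  apply Nat.sInf_le
  intro red
  classical
  have := ramseyAux (k - 1 + (l - 1)) (k - 1) (l - 1) rfl red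
    (Finset.univ : Finset (Fin ((k - 1 + (l - 1)).choose (k - 1))))
    (by simp)
  rcases this with ⟨t, -, ht⟩ | ⟨t, -, ht⟩
  · left
    exact ⟨t, by simpa [Nat.sub_add_cancel hk] using ht⟩
  · right
    exact ⟨t, by simpa [Nat.sub_add_cancel hl] using ht⟩

lemma choose_le_aux (x : ℝ) (hx0 : 0 < x) (hx1 : x < 1) (a b : ℕ) :
    ((a + b).choose a : ℝ) * (x ^ a * (1 - x) ^ b) ≤ 1 := by
  have hy : (0:ℝ) < 1 - x := by linarith
  have key : (∑ i ∈ Finset.range (a + b + 1),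
      x ^ i * (1 - x) ^ (a + b - i) * ((a + b).choose i : ℝ)) = 1 := by
    rw [← add_pow]
    norm_num
  have hmem : a ∈ Finset.range (a + b + 1) := by
    simp only [Finset.mem_range]; omega
  calc ((a + b).choose a : ℝ) * (x ^ a * (1 - x) ^ b)
      = x ^ a * (1 - x) ^ (a + b - a) * ((a + b).choose a : ℝ) := by
        rw [Nat.add_sub_cancel_left]; ring
    _ ≤ ∑ i ∈ Finset.range (a + b + 1),
        x ^ i * (1 - x) ^ (a + b - i) * ((a + b).choose i : ℝ) := by
        apply Finset.single_le_sum (f := fun i =>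
          x ^ i * (1 - x) ^ (a + b - i) * ((a + b).choose i : ℝ)) _ hmem
        intro i _
        positivity
    _ = 1 := key

theorem stmt2 (x : ℝ) (hx0 : 0 < x) (hx1 : x < 1) (k l : ℕ) (hk : 0 < k) (hl : 0 < l) :
    (ramsey k l : ℝ) ≤ x ^ (-((k : ℝ) - 1)) * (1 - x) ^ (-((l : ℝ) - 1)) := by
  have hy : (0:ℝ) < 1 - x := by linarith
  set a := k - 1 with ha
  set b := l - 1 with hb
  have hka : (k : ℝ) - 1 = (a : ℝ) := by
    rw [ha, Nat.cast_sub hk, Nat.cast_one]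
  have hlb : (l : ℝ) - 1 = (b : ℝ) := by
    rw [hb, Nat.cast_sub hl, Nat.cast_one]
  rw [hka, hlb, Real.rpow_neg hx0.le, Real.rpow_neg hy.le,
    Real.rpow_natCast, Real.rpow_natCast, ← mul_inv,
    show (x ^ a * (1 - x) ^ b)⁻¹ = 1 / (x ^ a * (1 - x) ^ b) from (one_div _).symm,
    le_div_iff₀ (by positivity)]
  calc (ramsey k l : ℝ) * (x ^ a * (1 - x) ^ b)
        ≤ ((a + b).choose a : ℝ) * (x ^ a * (1 - x) ^ b) := by
          apply mul_le_mul_of_nonneg_right _ (by positivity)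
          exact_mod_cast ramsey_le_choose k l hk hl
      _ ≤ 1 := choose_le_aux x hx0 hx1 a b
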